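/- arXiv:2505.04820 — 7 statements merged into one kernel-verified Lean document; each statement's English description precedes it below -/
import Mathlib

section
/- Let h : ℂ^N → ℝ be convex and differentiable, let W ∈ ℂ^{N×N} be Hermitian positive definite, let C ⊆ ℂ^N be a nonempty closed convex set, let α > 0, let g ∈ ℂ^N, and let x ∈ C. If x̄⁺ ∈ C is a minimizer over C of the function x̄ ↦ S_h(x̄, x, g, W, α), then Re⟨g, x − x̄⁺⟩ ≥ (1/α)‖x̄⁺ − x‖_W² + h(x̄⁺) − h(x). -/
open scoped ComplexOrder

noncomputable section

/-- `ℂ^N` with the standard complex inner product (conjugate-linear in the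
first argument) and the induced norm. -/
abbrev EC (N : ℕ) := EuclideanSpace ℂ (Fin N)

/-- Weighted squared norm `‖z‖_W² = zᴴ W z` (its real part, which is the full
value when `W` is Hermitian). -/
def wnorm2 {N : ℕ} (W : Matrix (Fin N) (Fin N) ℂ) (z : EC N) : ℝ :=
  (dotProduct (fun i => starRingEnd ℂ (z i)) (W.mulVec (fun i => z i))).re

/-- Surrogate `S_h(x̄, x, g, W, α) = Re⟨g, x̄ − x⟩ + (1/(2α))‖x̄ − x‖_W² + h(x̄) − h(x)`. -/
def Sh {N : ℕ} (h : EC N → ℝ) (W : Matrix (Fin N) (Fin N) ℂ) (α : ℝ)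
    (g x xb : EC N) : ℝ :=
  (inner ℂ g (xb - x) : ℂ).re + (1 / (2 * α)) * wnorm2 W (xb - x) + h xb - h x

/-- `D_h^C(x, g, W, α) = −(2/α)·inf_{x̄ ∈ C} S_h(x̄, x, g, W, α)`. -/
def Dh {N : ℕ} (h : EC N → ℝ) (C : Set (EC N)) (W : Matrix (Fin N) (Fin N) ℂ)
    (α : ℝ) (g x : EC N) : ℝ :=
  -(2 / α) * sInf ((fun xb => Sh h W α g x xb) '' C)

/-- The real-linear continuous functional `d ↦ Re⟨g, d⟩`, used to say that a
real-differentiable `f : ℂ^N → ℝ` has gradient `g` at a point. -/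
def gradDual {N : ℕ} (g : EC N) : EC N →L[ℝ] ℝ :=
  Complex.reCLM.comp ((innerSL ℂ g).restrictScalars ℝ)

/-- The rank-one matrix `u·uᴴ` with entries `uᵢ · conj(uⱼ)`. -/
def rankOne {N : ℕ} (u : EC N) : Matrix (Fin N) (Fin N) ℂ :=
  Matrix.vecMulVec (fun i => u i) (fun i => starRingEnd ℂ (u i))

end

lemma wnorm2_smul {N : ℕ} (W : Matrix (Fin N) (Fin N) ℂ) (r : ℝ) (z : EC N) :
    wnorm2 W (r • z) = r^2 * wnorm2 W z := by
  have h1 : (fun i => starRingEnd ℂ ((r • z) i)) = (r:ℂ) • (fun i => starRingEnd ℂ (z i)) := by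
    funext i
    simp [PiLp.smul_apply, Complex.real_smul, map_mul, Complex.conj_ofReal]
  have h2 : (fun i => (r • z) i) = (r:ℂ) • (fun i => z i) := by
    funext i; simp [PiLp.smul_apply, Complex.real_smul]
  have key : dotProduct (fun i => starRingEnd ℂ ((r • z) i))
      (W.mulVec (fun i => (r • z) i)) =
      (r:ℂ) * ((r:ℂ) * dotProduct (fun i => starRingEnd ℂ (z i))
        (W.mulVec (fun i => z i))) := by
    rw [h1, h2, Matrix.mulVec_smul, dotProduct_smul, smul_dotProduct]
    simp [smul_eq_mul]
  rw [wnorm2, wnorm2, key, Complex.re_ofReal_mul, Complex.re_ofReal_mul]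
  ring

lemma wnorm2_nonneg {N : ℕ} {W : Matrix (Fin N) (Fin N) ℂ} (hW : W.PosDef) (z : EC N) :
    0 ≤ wnorm2 W z := hW.posSemidef.re_dotProduct_nonneg (fun i => z i)


/-- First-order optimality inequality for the surrogate.
If `x̄⁺ ∈ C` minimizes `x̄ ↦ S_h(x̄, x, g, W, α)` over the nonempty closed
convex set `C`, with `h` convex differentiable, `W` Hermitian positive
definite, `α > 0`, `x ∈ C`, then
`Re⟨g, x − x̄⁺⟩ ≥ (1/α)‖x̄⁺ − x‖_W² + h(x̄⁺) − h(x)`. -/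
theorem stmt1 {N : ℕ} (h : EC N → ℝ) (hconv : ConvexOn ℝ Set.univ h)
    (hdiff : Differentiable ℝ h)
    (W : Matrix (Fin N) (Fin N) ℂ) (hW : W.PosDef)
    (C : Set (EC N)) (hCne : C.Nonempty) (hCcl : IsClosed C) (hCcv : Convex ℝ C)
    (α : ℝ) (hα : 0 < α) (g : EC N) (x : EC N) (hx : x ∈ C)
    (xp : EC N) (hxp : xp ∈ C)
    (hmin : IsMinOn (fun xb => Sh h W α g x xb) C xp) :
    (inner ℂ g (x - xp) : ℂ).re ≥ (1 / α) * wnorm2 W (xp - x) + h xp - h x := by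
  set Q := wnorm2 W (xp - x) with hQ
  have hQ0 : 0 ≤ Q := wnorm2_nonneg hW _
  set B := (inner ℂ g (xp - x) : ℂ).re with hB
  have hAB : (inner ℂ g (x - xp) : ℂ).re = -B := by
    rw [hB, show x - xp = -(xp - x) from (neg_sub xp x).symm, inner_neg_right, Complex.neg_re]
  -- key inequality for every t ∈ (0, 1]
  have key : ∀ t : ℝ, 0 < t → t ≤ 1 →
      (2 - t) / (2 * α) * Q + h xp - h x ≤ -B := by
    intro t ht0 ht1
    set xt : EC N := (1 - t) • xp + t • x with hxt
    have hxtC : xt ∈ C := hCcv hxp hx (by linarith) (by linarith) (by ring)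
    have hle : Sh h W α g x xp ≤ Sh h W α g x xt := hmin hxtC
    have hdiffeq : xt - x = (1 - t) • (xp - x) := by
      rw [hxt]; module
    have hin : (inner ℂ g (xt - x) : ℂ).re = (1 - t) * B := by
      rw [hdiffeq, ← Complex.coe_smul, inner_smul_right, Complex.re_ofReal_mul, hB]
    have hw : wnorm2 W (xt - x) = (1 - t)^2 * Q := by
      rw [hdiffeq, wnorm2_smul, hQ]
    have hh : h xt ≤ (1 - t) * h xp + t * h x :=
      hconv.2 (Set.mem_univ xp) (Set.mem_univ x) (by linarith) (by linarith) (by ring)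
    have hSh : Sh h W α g x xp = B + (1 / (2 * α)) * Q + h xp - h x := rfl
    have hSh2 : Sh h W α g x xt =
        (1 - t) * B + (1 / (2 * α)) * ((1 - t)^2 * Q) + h xt - h x := by
      rw [Sh, hin, hw]
    rw [hSh, hSh2] at hle
    have hα' : 0 < 2 * α := by linarith
    have h3 : t * (B + ((2 - t) / (2 * α)) * Q + h xp - h x) ≤ 0 := by
      have expand : t * (B + ((2 - t) / (2 * α)) * Q + h xp - h x)
          = (B + (1/(2*α)) * Q + h xp) -
            ((1 - t) * B + (1 / (2 * α)) * ((1 - t)^2 * Q) + ((1 - t) * h xp + t * h x)) := by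
        field_simp
        ring
      rw [expand]; linarith
    have h4 : B + ((2 - t) / (2 * α)) * Q + h xp - h x ≤ 0 := by
      nlinarith [h3, ht0]
    linarith
  rw [hAB, ge_iff_le]
  have hc : Continuous fun t : ℝ => (2 - t) / (2 * α) * Q + h xp - h x := by
    fun_prop
  have lim : Filter.Tendsto (fun t : ℝ => (2 - t) / (2 * α) * Q + h xp - h x)
      (nhdsWithin 0 (Set.Ioi 0)) (nhds ((1 / α) * Q + h xp - h x)) := by
    have hval : (2 - (0:ℝ)) / (2 * α) * Q + h xp - h x = (1 / α) * Q + h xp - h x := by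
      field_simp
      ring
    have := (hc.tendsto 0).mono_left (nhdsWithin_le_nhds (s := Set.Ioi (0:ℝ)))
    rwa [hval] at this
  refine le_of_tendsto lim ?_
  filter_upwards [Ioc_mem_nhdsGT_of_mem (Set.mem_Ico.mpr ⟨le_refl 0, one_pos⟩)] with t ht
  exact key t ht.1 ht.2
end

section
/- Let h : ℂ^N → ℝ be convex, let W ∈ ℂ^{N×N} be Hermitian positive definite, let C ⊆ ℂ^N be a nonempty closed convex set, let x ∈ C and g ∈ ℂ^N. Then for any α₁ ≥ α₂ > 0 it holds that D_h^C(x, g, W, α₂) ≥ D_h^C(x, g, W, α₁). -/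
open scoped ComplexOrder

lemma Sh_self {N : ℕ} (h : EC N → ℝ) (W : Matrix (Fin N) (Fin N) ℂ) (α : ℝ)
    (g x : EC N) : Sh h W α g x x = 0 := by
  simp [Sh, wnorm2]

/-- Monotonicity of `D_h^C` in the stepsize. For `h` convex,
`W` Hermitian positive definite, `C` nonempty closed convex, `x ∈ C`,
`g ∈ ℂ^N`, and `α₁ ≥ α₂ > 0`, one has
`D_h^C(x, g, W, α₂) ≥ D_h^C(x, g, W, α₁)`. -/
theorem stmt3 {N : ℕ} (h : EC N → ℝ) (hconv : ConvexOn ℝ Set.univ h)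
    (W : Matrix (Fin N) (Fin N) ℂ) (hW : W.PosDef)
    (C : Set (EC N)) (hCne : C.Nonempty) (hCcl : IsClosed C) (hCcv : Convex ℝ C)
    (x : EC N) (hx : x ∈ C) (g : EC N)
    (α₁ α₂ : ℝ) (hα₂ : 0 < α₂) (hα : α₂ ≤ α₁) :
    Dh h C W α₂ g x ≥ Dh h C W α₁ g x := by
  have hα₁ : 0 < α₁ := lt_of_lt_of_le hα₂ hα
  set τ : ℝ := α₂ / α₁ with hτdef
  have hτpos : 0 < τ := div_pos hα₂ hα₁
  have hτle : τ ≤ 1 := (div_le_one hα₁).mpr hα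
  -- image sets
  set T₁ := (fun xb => Sh h W α₁ g x xb) '' C with hT₁
  set T₂ := (fun xb => Sh h W α₂ g x xb) '' C with hT₂
  have hT₁ne : T₁.Nonempty := hCne.image _
  have hT₂ne : T₂.Nonempty := hCne.image _
  -- pointwise S₂ ≥ S₁
  have hpt : ∀ y : EC N, Sh h W α₁ g x y ≤ Sh h W α₂ g x y := by
    intro y
    unfold Sh
    have hq := wnorm2_nonneg hW (y - x)
    have : 1 / (2 * α₁) ≤ 1 / (2 * α₂) := by
      apply one_div_le_one_div_of_le (by linarith) (by linarith)
    nlinarith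
  -- key scaling inequality
  have key : ∀ xb ∈ C, x + τ • (xb - x) ∈ C ∧
      Sh h W α₂ g x (x + τ • (xb - x)) ≤ τ * Sh h W α₁ g x xb := by
    intro xb hxb
    have hmemeq : x + τ • (xb - x) = (1 - τ) • x + τ • xb := by
      rw [smul_sub, sub_smul, one_smul]; abel
    have hmem : x + τ • (xb - x) ∈ C := by
      rw [hmemeq]
      exact hCcv hx hxb (by linarith) (le_of_lt hτpos) (by ring)
    refine ⟨hmem, ?_⟩
    have hsub : (x + τ • (xb - x)) - x = τ • (xb - x) := by abel
    have hre : (inner ℂ g (τ • (xb - x)) : ℂ).re = τ * (inner ℂ g (xb - x) : ℂ).re := by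
      rw [← Complex.coe_smul, inner_smul_right]
      simp [Complex.re_ofReal_mul, inner_sub_right]
    have hh : h (x + τ • (xb - x)) ≤ (1 - τ) * h x + τ * h xb := by
      rw [hmemeq]
      exact hconv.2 (Set.mem_univ x) (Set.mem_univ xb) (by linarith) (le_of_lt hτpos) (by ring)
    have hcoef : (1 / (2 * α₂)) * τ^2 = τ * (1 / (2 * α₁)) := by
      field_simp [hτdef]
      rw [hτdef, div_mul_cancel₀ _ hα₁.ne']
    have hq := wnorm2_nonneg hW (xb - x)
    unfold Sh
    rw [hsub, hre, wnorm2_smul]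
    nlinarith [hh, hcoef, hq]
  by_cases hbdd : BddBelow T₁
  · -- bounded case
    have hbdd₂ : BddBelow T₂ := by
      obtain ⟨b, hb⟩ := hbdd
      refine ⟨b, ?_⟩
      rintro s ⟨y, hy, rfl⟩
      exact le_trans (hb ⟨y, hy, rfl⟩) (hpt y)
    have hineq : sInf T₂ / τ ≤ sInf T₁ := by
      apply le_csInf hT₁ne
      rintro s ⟨y, hy, rfl⟩
      obtain ⟨hmem, hle⟩ := key y hy
      have h1 : sInf T₂ ≤ Sh h W α₂ g x (x + τ • (y - x)) :=
        csInf_le hbdd₂ ⟨_, hmem, rfl⟩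
      have h2 : sInf T₂ ≤ τ * Sh h W α₁ g x y := le_trans h1 hle
      rw [div_le_iff₀ hτpos]
      linarith [h2]
    -- conclude
    have hτeq : sInf T₂ / τ = (α₁ / α₂) * sInf T₂ := by
      rw [hτdef]; field_simp
    unfold Dh
    rw [← hT₁, ← hT₂]
    have h2α₁ : (0:ℝ) < 2 / α₁ := by positivity
    rw [ge_iff_le, neg_mul, neg_mul, neg_le_neg_iff]
    rw [div_mul_eq_mul_div, div_mul_eq_mul_div, div_le_div_iff₀ hα₂ hα₁]
    have := hineq
    rw [hτeq] at this
    have h3 : α₂ * ((α₁ / α₂) * sInf T₂) = α₁ * sInf T₂ := by field_simp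
    nlinarith [this, hα₂, hα₁]
  · -- T₁ unbounded below : sInf T₁ = 0
    have h1 : sInf T₁ = 0 := Real.sInf_of_not_bddBelow hbdd
    unfold Dh
    rw [← hT₁, ← hT₂, h1, mul_zero, ge_iff_le]
    by_cases hbdd₂ : BddBelow T₂
    · have h2 : sInf T₂ ≤ 0 := by
        have : Sh h W α₂ g x x ∈ T₂ := ⟨x, hx, rfl⟩
        rw [Sh_self] at this
        exact csInf_le hbdd₂ this
      have : (0:ℝ) < 2 / α₂ := by positivity
      nlinarith
    · rw [Real.sInf_of_not_bddBelow hbdd₂, mul_zero]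
end

section
/- Let h : ℂ^N → ℝ be convex, let W ∈ ℂ^{N×N} be Hermitian positive definite, let g, x ∈ ℂ^N, and let α₁ ≥ α₂ > 0. For any x̄₁ ∈ ℂ^N, set x̄₂ = (α₂/α₁)·x̄₁ + ((α₁ − α₂)/α₁)·x. Then −(2/α₁)·S_h(x̄₁, x, g, W, α₁) ≤ −(2/α₂)·S_h(x̄₂, x, g, W, α₂). -/
open scoped ComplexOrder

/-- Scaled-surrogate comparison. For `h` convex, `W`
Hermitian positive definite, `α₁ ≥ α₂ > 0`, any `x̄₁`, and
`x̄₂ = (α₂/α₁)·x̄₁ + ((α₁ − α₂)/α₁)·x`, one has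
`−(2/α₁)·S_h(x̄₁, x, g, W, α₁) ≤ −(2/α₂)·S_h(x̄₂, x, g, W, α₂)`. -/
theorem stmt4 {N : ℕ} (h : EC N → ℝ) (hconv : ConvexOn ℝ Set.univ h)
    (W : Matrix (Fin N) (Fin N) ℂ) (hW : W.PosDef)
    (g x : EC N)
    (α₁ α₂ : ℝ) (hα₂ : 0 < α₂) (hα : α₂ ≤ α₁)
    (xb₁ xb₂ : EC N)
    (hxb₂ : xb₂ = (α₂ / α₁) • xb₁ + ((α₁ - α₂) / α₁) • x) :
    -(2 / α₁) * Sh h W α₁ g x xb₁ ≤ -(2 / α₂) * Sh h W α₂ g x xb₂ := by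
  have hα₁ : 0 < α₁ := lt_of_lt_of_le hα₂ hα
  set t : ℝ := α₂ / α₁ with ht
  have ht0 : 0 < t := div_pos hα₂ hα₁
  have ht1 : t ≤ 1 := (div_le_one hα₁).2 hα
  have hsum : (α₁ - α₂) / α₁ = 1 - t := by rw [ht]; field_simp
  have hxb₂' : xb₂ = t • xb₁ + (1 - t) • x := by rw [hxb₂, hsum]
  have hd : xb₂ - x = t • (xb₁ - x) := by
    rw [hxb₂']; module
  -- convexity
  have hh : h xb₂ - h x ≤ t * (h xb₁ - h x) := by
    have := hconv.2 (Set.mem_univ xb₁) (Set.mem_univ x) ht0.le (by linarith : (0:ℝ) ≤ 1 - t) (by ring)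
    rw [← hxb₂'] at this
    simp only [smul_eq_mul] at this
    nlinarith [this]
  -- inner product scaling
  have hi : (inner ℂ g (xb₂ - x) : ℂ).re = t * (inner ℂ g (xb₁ - x) : ℂ).re := by
    rw [hd]
    have : (t : ℝ) • (xb₁ - x) = (t : ℂ) • (xb₁ - x) := by
      simp [Complex.coe_smul]
    rw [this, inner_smul_right]
    simp [inner_sub_right]
  -- weighted norm scaling
  have hw : wnorm2 W (xb₂ - x) = t ^ 2 * wnorm2 W (xb₁ - x) := by
    rw [hd]
    have hz : ∀ i, (t • (xb₁ - x)) i = (t : ℂ) * (xb₁ - x) i := by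
      intro i; simp [Complex.real_smul]
    simp only [wnorm2, dotProduct, Matrix.mulVec, hz, map_mul, Finset.mul_sum]
    rw [← Complex.re_ofReal_mul]
    congr 1
    push_cast
    rw [Finset.mul_sum]
    refine Finset.sum_congr rfl fun i _ => ?_
    rw [Finset.mul_sum]
    refine Finset.sum_congr rfl fun j _ => ?_
    have hc : (starRingEnd ℂ) (t : ℂ) = (t : ℂ) := by simp
    rw [hc]; ring
  set R := (inner ℂ g (xb₁ - x) : ℂ).re with hR
  set wv := wnorm2 W (xb₁ - x) with hwv
  have key : (2 / α₂) * Sh h W α₂ g x xb₂ ≤ (2 / α₁) * Sh h W α₁ g x xb₁ := by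
    have e2 : Sh h W α₂ g x xb₂ = t * R + (1 / (2 * α₂)) * (t ^ 2 * wv) + (h xb₂ - h x) := by
      simp only [Sh, hi, hw]; ring
    have e1 : Sh h W α₁ g x xb₁ = R + (1 / (2 * α₁)) * wv + (h xb₁ - h x) := by
      simp only [Sh]; ring
    rw [e1, e2]
    have step : (2 / α₂) * (t * R + (1 / (2 * α₂)) * (t ^ 2 * wv) + (h xb₂ - h x)) ≤
        (2 / α₂) * (t * R + (1 / (2 * α₂)) * (t ^ 2 * wv) + t * (h xb₁ - h x)) := by
      have h2 : 0 < 2 / α₂ := by positivity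
      nlinarith [hh, h2]
    refine step.trans (le_of_eq ?_)
    rw [ht]
    field_simp
  nlinarith [key]
end

section
/- Let s, v ∈ ℂ^N be nonzero vectors with b := Re⟨s, v⟩ > 0, and set a := ⟨s, s⟩ and c := ⟨v, v⟩ (so a, c > 0 and b² ≤ a·c by the Cauchy–Schwarz inequality). Define τ = a/b − sqrt((a/b)² − a/c). Then τ is well defined (the quantity under the square root is nonnegative) and b/(2c) < τ ≤ b/c. -/
open scoped ComplexOrder

/-- Bounds on the self-scaling parameter `τ`. For nonzero
`s, v ∈ ℂ^N` with `b = Re⟨s, v⟩ > 0`, `a = ⟨s, s⟩`, `c = ⟨v, v⟩`, the quantity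
`τ = a/b − sqrt((a/b)² − a/c)` is well defined (the radicand is nonnegative)
and satisfies `b/(2c) < τ ≤ b/c`. -/
theorem stmt5 {N : ℕ} (s v : EC N) (hs : s ≠ 0) (hv : v ≠ 0)
    (a b c τ : ℝ)
    (ha : a = (inner ℂ s s : ℂ).re) (hb : b = (inner ℂ s v : ℂ).re)
    (hc : c = (inner ℂ v v : ℂ).re) (hbpos : 0 < b)
    (hτ : τ = a / b - Real.sqrt ((a / b) ^ 2 - a / c)) :
    0 ≤ (a / b) ^ 2 - a / c ∧ b / (2 * c) < τ ∧ τ ≤ b / c := by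
  have ha' : a = ‖s‖ ^ 2 := by
    rw [ha]; simpa using inner_self_eq_norm_sq (𝕜 := ℂ) s
  have hc' : c = ‖v‖ ^ 2 := by
    rw [hc]; simpa using inner_self_eq_norm_sq (𝕜 := ℂ) v
  have ha0 : 0 < a := by
    rw [ha']; exact pow_pos (norm_pos_iff.mpr hs) 2
  have hc0 : 0 < c := by
    rw [hc']; exact pow_pos (norm_pos_iff.mpr hv) 2
  have hcs : b ≤ ‖s‖ * ‖v‖ := by
    rw [hb]; simpa using re_inner_le_norm (𝕜 := ℂ) s v
  have hbac : b ^ 2 ≤ a * c := by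
    rw [ha', hc']
    nlinarith [norm_nonneg s, norm_nonneg v]
  have hR : 0 ≤ (a / b) ^ 2 - a / c := by
    rw [sub_nonneg, div_pow, div_le_div_iff₀ hc0 (by positivity)]
    nlinarith
  refine ⟨hR, ?_, ?_⟩
  · rw [hτ, lt_sub_comm]
    have hx : 0 < a / b - b / (2 * c) := by
      rw [sub_pos, div_lt_div_iff₀ (by positivity) hbpos]
      nlinarith
    rw [Real.sqrt_lt' hx]
    have h3 : a / b * (b / (2 * c)) = a / (2 * c) := by field_simp
    have h4 : a / (2 * c) * 2 = a / c := by field_simp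
    have h5 : 0 < (b / (2 * c)) ^ 2 := by positivity
    nlinarith
  · rw [hτ, sub_le_iff_le_add, ← sub_le_iff_le_add']
    have h1 : 0 ≤ a / b - b / c := by
      rw [sub_nonneg, div_le_div_iff₀ hc0 hbpos]
      nlinarith
    refine (Real.le_sqrt h1 hR).mpr ?_
    have h3 : a / b * (b / c) = a / c := by field_simp
    have h4 : (a * c - b ^ 2) / c ^ 2 = a / c - (b / c) ^ 2 := by
      field_simp
    nlinarith [div_nonneg (sub_nonneg.mpr hbac) (sq_nonneg c)]
end

section
/- Let s, v ∈ ℂ^N be nonzero vectors with b := Re⟨s, v⟩ > 0, set a := ⟨s, s⟩ and c := ⟨v, v⟩, and let τ be a real number with b/(2c) ≤ τ ≤ b/c. Set u = s − τ·v and ρ = Re⟨u, v⟩, and let δ > 0. If ρ > δ·‖u‖·‖v‖, then ⟨u, u⟩/ρ ≤ a/(δ·b). -/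
open scoped ComplexOrder

/-- Bound on `⟨u,u⟩/ρ`. For nonzero `s, v ∈ ℂ^N` with
`b = Re⟨s, v⟩ > 0`, `a = ⟨s, s⟩`, `c = ⟨v, v⟩`, a real `τ` with
`b/(2c) ≤ τ ≤ b/c`, `u = s − τ·v`, `ρ = Re⟨u, v⟩` and `δ > 0`: if
`ρ > δ‖u‖‖v‖` then `⟨u, u⟩/ρ ≤ a/(δ·b)`. -/
theorem stmt6 {N : ℕ} (s v : EC N) (hs : s ≠ 0) (hv : v ≠ 0)
    (a b c : ℝ)
    (ha : a = (inner ℂ s s : ℂ).re) (hb : b = (inner ℂ s v : ℂ).re)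
    (hc : c = (inner ℂ v v : ℂ).re) (hbpos : 0 < b)
    (τ : ℝ) (hτl : b / (2 * c) ≤ τ) (hτu : τ ≤ b / c)
    (u : EC N) (hu : u = s - (τ : ℂ) • v)
    (ρ : ℝ) (hρ : ρ = (inner ℂ u v : ℂ).re)
    (δ : ℝ) (hδ : 0 < δ) (hcond : ρ > δ * ‖u‖ * ‖v‖) :
    (inner ℂ u u : ℂ).re / ρ ≤ a / (δ * b) := by
  have hcpos : 0 < c := by
    rw [hc]
    have := inner_self_ne_zero (𝕜 := ℂ) (x := v) |>.mpr hv
    have h0 : (0:ℝ) ≤ (inner ℂ v v : ℂ).re := by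
      simpa using inner_self_nonneg (𝕜 := ℂ) (x := v)
    have : (inner ℂ v v : ℂ).re ≠ 0 := by
      intro h
      have him : (inner ℂ v v : ℂ).im = 0 := inner_self_im (𝕜 := ℂ) v
      exact this (Complex.ext h him)
    exact lt_of_le_of_ne h0 (Ne.symm this)
  have hτpos : 0 < τ :=
    lt_of_lt_of_le (div_pos hbpos (by linarith)) hτl
  have hτc : τ * c ≤ b := by
    rw [le_div_iff₀ hcpos] at hτu; linarith
  have hnu : (inner ℂ u u : ℂ).re = ‖u‖ ^ 2 := by
    simpa using inner_self_eq_norm_sq (𝕜 := ℂ) u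
  have hns : a = ‖s‖ ^ 2 := by
    rw [ha]; simpa using inner_self_eq_norm_sq (𝕜 := ℂ) s
  -- expand ‖u‖²
  have hexp : (inner ℂ u u : ℂ).re = a - 2 * τ * b + τ ^ 2 * c := by
    rw [hu, ha, hb, hc]
    simp only [inner_sub_left, inner_sub_right, inner_smul_left, inner_smul_right,
      Complex.sub_re, Complex.add_re, Complex.mul_re, Complex.conj_ofReal,
      Complex.ofReal_re, Complex.ofReal_im, map_sub]
    have hvs : (inner ℂ v s : ℂ).re = (inner ℂ s v : ℂ).re := by
      rw [← inner_conj_symm s v, Complex.conj_re]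
    rw [hvs]
    ring
  have hule : ‖u‖ ≤ ‖s‖ := by
    have h2 : ‖u‖ ^ 2 ≤ ‖s‖ ^ 2 := by
      rw [← hnu, hexp, ← hns]; nlinarith
    nlinarith [norm_nonneg u, norm_nonneg s]
  have hbs : b ≤ ‖s‖ * ‖v‖ := by
    rw [hb]; simpa using re_inner_le_norm (𝕜 := ℂ) s v
  have hune : u ≠ 0 := by
    intro h
    have h0 : ρ = 0 := by rw [hρ, h]; simp
    rw [h0, h] at hcond
    simp at hcond
  have hupos : 0 < ‖u‖ := norm_pos_iff.mpr hune
  have hvpos : 0 < ‖v‖ := norm_pos_iff.mpr hv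
  have hden : 0 < δ * ‖u‖ * ‖v‖ := by positivity
  have hρpos : 0 < ρ := lt_trans hden hcond
  have step1 : (inner ℂ u u : ℂ).re / ρ ≤ ‖u‖ ^ 2 / (δ * ‖u‖ * ‖v‖) := by
    rw [hnu]
    exact div_le_div_of_nonneg_left (by positivity) hden (le_of_lt hcond)
  have step2 : ‖u‖ ^ 2 / (δ * ‖u‖ * ‖v‖) = ‖u‖ / (δ * ‖v‖) := by
    field_simp
  have step3 : ‖u‖ / (δ * ‖v‖) ≤ a / (δ * b) := by
    rw [div_le_div_iff₀ (by positivity) (by positivity)]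
    have key : ‖u‖ * b ≤ a * ‖v‖ := by
      rw [hns]
      calc ‖u‖ * b ≤ ‖s‖ * (‖s‖ * ‖v‖) := mul_le_mul hule hbs hbpos.le (norm_nonneg s)
        _ = ‖s‖ ^ 2 * ‖v‖ := by ring
    calc ‖u‖ * (δ * b) = δ * (‖u‖ * b) := by ring
      _ ≤ δ * (a * ‖v‖) := mul_le_mul_of_nonneg_left key hδ.le
      _ = a * (δ * ‖v‖) := by ring
  calc (inner ℂ u u : ℂ).re / ρ ≤ ‖u‖ ^ 2 / (δ * ‖u‖ * ‖v‖) := step1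
    _ = ‖u‖ / (δ * ‖v‖) := step2
    _ ≤ a / (δ * b) := step3
end

section
/- Let δ > 0, θ₁ ∈ (0,1), θ₂ ∈ (1,∞). Let s, v ∈ ℂ^N be nonzero with a := ⟨s,s⟩, b := Re⟨s,v⟩, c := ⟨v,v⟩, and suppose θ₁ ≤ b/a and c/b ≤ θ₂ (in particular b > 0). Define τ = a/b − sqrt((a/b)² − a/c) and ρ = Re⟨s − τv, v⟩. Define u ∈ ℂ^N by u = s − τv if ρ > δ·‖s − τv‖·‖v‖, and u = 0 otherwise. Then the matrix H = τ·I_N + u·uᴴ/ρ (interpreted as H = τ·I_N when u = 0) is Hermitian positive definite and satisfies (1/(2θ₂))·I_N ⪯ H ⪯ ((1 + δ)/(δ·θ₁))·I_N in the Loewner order. -/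
open scoped ComplexOrder

lemma quadAux {N : ℕ} (r t : ℝ) (u : EC N) (x : Fin N → ℂ) :
    dotProduct (star x) ((r • (1 : Matrix (Fin N) (Fin N) ℂ) + t • rankOne u).mulVec x)
      = ((r * ∑ i, Complex.normSq (x i) + t * Complex.normSq (∑ i, (starRingEnd ℂ) (u i) * x i) : ℝ) : ℂ) := by
  set c : ℂ := ∑ i, (starRingEnd ℂ) (u i) * x i with hc
  have hz : ∀ z : ℂ, star z * z = ((Complex.normSq z : ℝ) : ℂ) := by
    intro z
    rw [Complex.star_def, Complex.normSq_eq_conj_mul_self]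
  have entry : ∀ i j, (r • (1 : Matrix (Fin N) (Fin N) ℂ) + t • rankOne u) i j
      = (r : ℂ) * (if i = j then 1 else 0) + (t : ℂ) * (u i * (starRingEnd ℂ) (u j)) := by
    intro i j
    simp [rankOne, Matrix.add_apply, Matrix.smul_apply, Matrix.one_apply, Matrix.vecMulVec_apply,
      Complex.real_smul]
  have hmv : ∀ i, ((r • (1 : Matrix (Fin N) (Fin N) ℂ) + t • rankOne u).mulVec x) i
      = (r : ℂ) * x i + (t : ℂ) * (u i * c) := by
    intro i
    simp only [Matrix.mulVec, dotProduct, entry, add_mul, Finset.sum_add_distrib,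
      ite_mul, one_mul, zero_mul, Finset.sum_ite_eq, Finset.mem_univ, if_true, mul_ite, mul_zero,
      mul_assoc, ← Finset.mul_sum]
    rfl
  simp only [dotProduct, Pi.star_apply, hmv, mul_add, Finset.sum_add_distrib]
  have h1 : ∑ i, star (x i) * ((r:ℂ) * x i) = (r:ℂ) * ∑ i, ((Complex.normSq (x i) : ℝ) : ℂ) := by
    rw [Finset.mul_sum]
    congr 1; ext i
    rw [← hz]; ring
  have h2 : ∑ i, star (x i) * ((t:ℂ) * (u i * c)) = (t:ℂ) * ((Complex.normSq c : ℝ) : ℂ) := by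
    have h3 : ((Complex.normSq c : ℝ) : ℂ) = star c * c := (hz c).symm
    rw [h3, hc, star_sum, Finset.sum_mul, Finset.mul_sum]
    congr 1; ext i
    simp only [star_mul', Complex.star_def, Complex.conj_conj]
    ring
  rw [h1, h2]
  push_cast
  ring

lemma hermAux {N : ℕ} (r t : ℝ) (u : EC N) :
    (r • (1 : Matrix (Fin N) (Fin N) ℂ) + t • rankOne u).IsHermitian := by
  ext i j
  simp only [rankOne, Matrix.conjTranspose_apply, Matrix.add_apply, Matrix.smul_apply,
    Matrix.one_apply, Matrix.vecMulVec_apply, star_add, star_smul, star_mul', star_one, star_zero,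
    apply_ite (star : ℂ → ℂ), Complex.star_def, Complex.conj_conj]
  by_cases h : i = j <;> simp [h, eq_comm, mul_comm, Complex.conj_ofReal]

lemma sumNormSq {N : ℕ} (x : EC N) : (∑ i, Complex.normSq (x i)) = ‖x‖ ^ 2 := by
  rw [EuclideanSpace.norm_eq, Real.sq_sqrt (Finset.sum_nonneg fun i _ => sq_nonneg _)]
  simp [Complex.normSq_eq_norm_sq]

lemma sumInner {N : ℕ} (u x : EC N) :
    (∑ i, (starRingEnd ℂ) (u i) * x i) = (inner ℂ u x : ℂ) := by
  simp [PiLp.inner_apply, RCLike.inner_apply, mul_comm]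

lemma psdAux {N : ℕ} (r t : ℝ) (u : EC N)
    (h : ∀ x : EC N, 0 ≤ r * ∑ i, Complex.normSq (x i)
        + t * Complex.normSq (∑ i, (starRingEnd ℂ) (u i) * x i)) :
    (r • (1 : Matrix (Fin N) (Fin N) ℂ) + t • rankOne u).PosSemidef :=
  Matrix.posSemidef_iff_dotProduct_mulVec.2
    ⟨hermAux r t u, fun x => by rw [quadAux]; exact Complex.zero_le_real.2 (h (WithLp.toLp 2 x))⟩

lemma sumNormSqPos {N : ℕ} (x : Fin N → ℂ) (hx : x ≠ 0) :
    0 < ∑ i, Complex.normSq (x i) := by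
  obtain ⟨i, hi⟩ := Function.ne_iff.mp hx
  exact Finset.sum_pos' (fun j _ => Complex.normSq_nonneg _)
    ⟨i, Finset.mem_univ i, Complex.normSq_pos.2 hi⟩

lemma pdAux {N : ℕ} (r t : ℝ) (u : EC N) (hr : 0 < r)
    (h : ∀ x : EC N, 0 ≤ t * Complex.normSq (∑ i, (starRingEnd ℂ) (u i) * x i)) :
    (r • (1 : Matrix (Fin N) (Fin N) ℂ) + t • rankOne u).PosDef := by
  refine Matrix.posDef_iff_dotProduct_mulVec.2 ⟨hermAux r t u, fun x hx => ?_⟩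
  rw [quadAux]
  refine Complex.zero_lt_real.2 ?_
  have h1 := sumNormSqPos x hx
  have h2 : 0 ≤ t * Complex.normSq (∑ i, (starRingEnd ℂ) (u i) * x i) := h (WithLp.toLp 2 x)
  nlinarith

private lemma r1 {x y bb : ℝ} (h1 : bb ≤ x * y) (hb : 0 < bb) : bb ^ 2 ≤ x ^ 2 * y ^ 2 := by
  nlinarith

private lemma r2 {a b c : ℝ} (ha : 0 < a) (h : b ^ 2 ≤ a * c) : a * b ^ 2 ≤ a ^ 2 * c := by
  nlinarith

private lemma r3 {p q r : ℝ} (h : q ^ 2 = p ^ 2 - r) (hr : 0 < r) (hq : 0 ≤ q) (hp : 0 < p) :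
    q < p := by nlinarith

private lemma r5 {a b c p q θ₂ : ℝ} (hb : 0 < b) (hc : 0 < c) (hp : 0 < p) (hq0 : 0 ≤ q)
    (hqp : q < p) (hpb : p * b = a) (hrc : (p ^ 2 - q ^ 2) * c = a) (hcθb : c ≤ θ₂ * b)
    (hθ₂ : 0 < θ₂) : 1 ≤ (p - q) * (2 * θ₂) := by
  have h2pc : b ≤ 2 * (p - q) * c := by
    have key : p * b ≤ p * (2 * (p - q) * c) := by
      nlinarith [mul_nonneg hc.le (sq_nonneg (p - q))]
    exact le_of_mul_le_mul_left key hp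
  nlinarith [mul_le_mul_of_nonneg_left hcθb (sub_nonneg.2 hqp.le)]

private lemma r6 {δ θ₁ : ℝ} (hδ : 0 < δ) (hθ : 0 < θ₁) : 1 / θ₁ ≤ (1 + δ) / (δ * θ₁) := by
  rw [div_le_div_iff₀ hθ (by positivity)]
  nlinarith

private lemma r6' {δ θ₁ : ℝ} (hδ : 0 < δ) (hδ1 : δ ≤ 1) (hθ : 0 < θ₁) :
    2 / θ₁ ≤ (1 + δ) / (δ * θ₁) := by
  rw [div_le_div_iff₀ hθ (by positivity)]
  nlinarith

private lemma r7 {d x y ρ : ℝ} (h1 : d * x * y < ρ) (h2 : ρ ≤ x * y) (hx : 0 < x)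
    (hy : 0 < y) : d ≤ 1 := by nlinarith [mul_pos hx hy]

private lemma r8 {i w x : ℝ} (h : i ≤ w * x) (hi : 0 ≤ i) (hw : 0 ≤ w) (hx : 0 ≤ x) :
    i ^ 2 ≤ w ^ 2 * x ^ 2 := by nlinarith

private lemma r10 {lam τ rinv W S T : ℝ} (h1 : 0 ≤ (lam - (τ + rinv * W)) * S)
    (h2 : 0 ≤ rinv * (W * S - T)) : 0 ≤ (lam - τ) * S + -rinv * T := by nlinarith

set_option maxHeartbeats 1000000 in
/-- The estimated inverse Hessian is Hermitian positive
definite and uniformly bounded. With `δ > 0`, `θ₁ ∈ (0,1)`, `θ₂ ∈ (1,∞)`,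
nonzero `s, v ∈ ℂ^N`, `a = ⟨s,s⟩`, `b = Re⟨s,v⟩ > 0`, `c = ⟨v,v⟩`,
`θ₁ ≤ b/a`, `c/b ≤ θ₂`, `τ = a/b − sqrt((a/b)² − a/c)`, `ρ = Re⟨s − τv, v⟩`,
`u = s − τv` if `ρ > δ‖s − τv‖‖v‖` and `u = 0` otherwise, the matrix
`H = τ·I + u·uᴴ/ρ` is Hermitian positive definite and satisfies
`(1/(2θ₂))·I ⪯ H ⪯ ((1+δ)/(δθ₁))·I` in the Loewner order. -/

theorem stmt7 {N : ℕ} (δ θ₁ θ₂ : ℝ) (hδ : 0 < δ)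
    (hθ₁ : θ₁ ∈ Set.Ioo (0 : ℝ) 1) (hθ₂ : 1 < θ₂)
    (s v : EC N) (hs : s ≠ 0) (hv : v ≠ 0)
    (a b c : ℝ)
    (ha : a = (inner ℂ s s : ℂ).re) (hb : b = (inner ℂ s v : ℂ).re)
    (hc : c = (inner ℂ v v : ℂ).re) (hbpos : 0 < b)
    (hab : θ₁ ≤ b / a) (hcb : c / b ≤ θ₂)
    (τ : ℝ) (hτ : τ = a / b - Real.sqrt ((a / b) ^ 2 - a / c))
    (ρ : ℝ) (hρ : ρ = (inner ℂ (s - (τ : ℂ) • v) v : ℂ).re)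
    (u : EC N)
    (hu : u = if ρ > δ * ‖s - (τ : ℂ) • v‖ * ‖v‖ then s - (τ : ℂ) • v else 0)
    (H : Matrix (Fin N) (Fin N) ℂ)
    (hH : H = τ • (1 : Matrix (Fin N) (Fin N) ℂ) + ρ⁻¹ • rankOne u) :
    H.PosDef ∧
      (H - (1 / (2 * θ₂)) • (1 : Matrix (Fin N) (Fin N) ℂ)).PosSemidef ∧
      (((1 + δ) / (δ * θ₁)) • (1 : Matrix (Fin N) (Fin N) ℂ) - H).PosSemidef := by
  obtain ⟨hθ₁0, hθ₁1⟩ := hθ₁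
  have hθ₂0 : 0 < θ₂ := lt_trans one_pos hθ₂
  obtain ⟨w, hw⟩ : ∃ w : EC N, w = s - (τ : ℂ) • v := ⟨_, rfl⟩
  rw [← hw] at hρ hu
  -- basic quantities
  have ha' : a = ‖s‖ ^ 2 := by rw [ha]; exact inner_self_eq_norm_sq (𝕜 := ℂ) s
  have hc' : c = ‖v‖ ^ 2 := by rw [hc]; exact inner_self_eq_norm_sq (𝕜 := ℂ) v
  have hspos : 0 < ‖s‖ := norm_pos_iff.mpr hs
  have hvpos : 0 < ‖v‖ := norm_pos_iff.mpr hv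
  have hapos : 0 < a := by rw [ha']; positivity
  have hcpos : 0 < c := by rw [hc']; positivity
  have hbac : b ^ 2 ≤ a * c := by
    have h1 : b ≤ ‖s‖ * ‖v‖ := by
      rw [hb]
      exact le_trans (Complex.re_le_norm _)
        (by exact norm_inner_le_norm s v)
    rw [ha', hc']
    exact r1 h1 hbpos
  obtain ⟨p, hp⟩ : ∃ x : ℝ, x = a / b := ⟨_, rfl⟩
  rw [← hp] at hτ
  obtain ⟨q, hqdef⟩ : ∃ x : ℝ, x = Real.sqrt (p ^ 2 - a / c) := ⟨_, rfl⟩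
  rw [← hqdef] at hτ
  have hppos : 0 < p := hp ▸ div_pos hapos hbpos
  have hpq0 : 0 ≤ p ^ 2 - a / c := by
    have h1 : a / c ≤ p ^ 2 := by
      rw [hp, div_pow, div_le_div_iff₀ hcpos (pow_pos hbpos 2)]
      exact r2 hapos hbac
    linarith
  have hq0 : 0 ≤ q := hqdef ▸ Real.sqrt_nonneg _
  have hq2 : q ^ 2 = p ^ 2 - a / c := by rw [hqdef]; exact Real.sq_sqrt hpq0
  have hqp : q < p := r3 hq2 (div_pos hapos hcpos) hq0 hppos
  have hτpq : τ = p - q := hτ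
  have hτpos : 0 < τ := by rw [hτpq]; linarith
  have hpb : p * b = a := by rw [hp]; field_simp
  have hrc : (p ^ 2 - q ^ 2) * c = a := by
    rw [hq2]; field_simp; ring
  have hba : θ₁ * a ≤ b := (le_div_iff₀ hapos).mp hab
  have hp_up : p ≤ 1 / θ₁ := by
    rw [hp, div_le_div_iff₀ hbpos hθ₁0]
    linarith
  have hcθb : c ≤ θ₂ * b := by
    rw [div_le_iff₀ hbpos] at hcb; linarith
  have hτlow : 1 / (2 * θ₂) ≤ τ := by
    rw [div_le_iff₀ (by positivity), hτpq]
    exact r5 hbpos hcpos hppos hq0 hqp hpb hrc hcθb hθ₂0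
  have hτ_up : τ ≤ 1 / θ₁ := by rw [hτpq]; linarith
  have hlam1 : 1 / θ₁ ≤ (1 + δ) / (δ * θ₁) := r6 hδ hθ₁0
  -- matrix decompositions
  have e1 : H - (1 / (2 * θ₂)) • (1 : Matrix (Fin N) (Fin N) ℂ)
      = (τ - 1 / (2 * θ₂)) • (1 : Matrix (Fin N) (Fin N) ℂ) + ρ⁻¹ • rankOne u := by
    rw [hH, sub_smul]; abel
  have e2 : ((1 + δ) / (δ * θ₁)) • (1 : Matrix (Fin N) (Fin N) ℂ) - H
      = ((1 + δ) / (δ * θ₁) - τ) • (1 : Matrix (Fin N) (Fin N) ℂ) + (-ρ⁻¹) • rankOne u := by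
    rw [hH, sub_smul, neg_smul]; abel
  by_cases hcase : ρ > δ * ‖w‖ * ‖v‖
  · -- nonzero branch
    have huw : u = w := by rw [hu, if_pos hcase]
    have hw0 : w ≠ 0 := by
      intro h0
      rw [h0] at hcase
      simp only [norm_zero, mul_zero, zero_mul] at hcase
      have : ρ = 0 := by rw [hρ, h0]; simp
      linarith
    have hwpos : 0 < ‖w‖ := norm_pos_iff.mpr hw0
    have hρpos : 0 < ρ := lt_trans (by positivity) hcase
    have hρle : ρ ≤ ‖w‖ * ‖v‖ := by
      rw [hρ]
      exact le_trans (Complex.re_le_norm _)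
        (by exact norm_inner_le_norm w v)
    have hδ1 : δ ≤ 1 := r7 hcase hρle hwpos hvpos
    have him : (inner ℂ v v : ℂ).im = 0 := by
      simpa using inner_self_im (𝕜 := ℂ) v
    have hvs : (inner ℂ v s : ℂ).re = b := by
      rw [hb]
      simpa using inner_re_symm (𝕜 := ℂ) v s
    have hρ_eq : ρ = b - τ * c := by
      have hiw : (inner ℂ w v : ℂ) = (inner ℂ s v : ℂ) - (τ : ℂ) * (inner ℂ v v : ℂ) := by
        rw [hw, inner_sub_left, inner_smul_left, Complex.conj_ofReal]
      rw [hρ, hiw, Complex.sub_re, Complex.mul_re]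
      simp [him, hb, hc]
    have hwsq : ‖w‖ ^ 2 = a - 2 * τ * b + τ ^ 2 * c := by
      have h0 : (‖w‖ : ℝ) ^ 2 = (inner ℂ w w : ℂ).re := by
        simpa using (inner_self_eq_norm_sq (𝕜 := ℂ) w).symm
      rw [h0]
      have hiw : (inner ℂ w w : ℂ) = (inner ℂ s s : ℂ) - (τ : ℂ) * (inner ℂ v s : ℂ)
          - (τ : ℂ) * (inner ℂ s v : ℂ) + (τ : ℂ) * ((τ : ℂ) * (inner ℂ v v : ℂ)) := by
        rw [hw, inner_sub_left, inner_sub_right, inner_sub_right, inner_smul_left,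
          inner_smul_right, inner_smul_left, inner_smul_right, Complex.conj_ofReal]
        ring
      rw [hiw]
      simp only [Complex.add_re, Complex.sub_re, Complex.mul_re, Complex.ofReal_re,
        Complex.ofReal_im, zero_mul, sub_zero, him, mul_zero]
      rw [hvs, ← hb, ← ha, ← hc]
      ring
    have hkey : ‖w‖ ^ 2 = 2 * q * ρ := by
      rw [hwsq, hρ_eq, hτpq]
      linear_combination (-2 : ℝ) * hpb + hrc
    have h2q : ρ⁻¹ * ‖w‖ ^ 2 = 2 * q := by
      rw [hkey]; field_simp
    have hfin : τ + ρ⁻¹ * ‖w‖ ^ 2 ≤ (1 + δ) / (δ * θ₁) := by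
      have h2 : 2 / θ₁ ≤ (1 + δ) / (δ * θ₁) := r6' hδ hδ1 hθ₁0
      rw [h2q, hτpq]
      have h3 : p - q + 2 * q = p + q := by ring
      have h4 : 2 * (1 / θ₁) = 2 / θ₁ := by ring
      linarith [hqp, hp_up, h2, h3, h4]
    have hCS : ∀ x : EC N, Complex.normSq (∑ i, (starRingEnd ℂ) (w i) * x i)
        ≤ ‖w‖ ^ 2 * ∑ i, Complex.normSq (x i) := by
      intro x
      rw [sumInner, sumNormSq]
      have h1 := norm_inner_le_norm (𝕜 := ℂ) w x
      have h2 : Complex.normSq (inner ℂ w x : ℂ) = ‖(inner ℂ w x : ℂ)‖ ^ 2 := by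
        rw [Complex.sq_norm]
      rw [h2]
      exact r8 h1 (norm_nonneg _) (norm_nonneg w) (norm_nonneg x)
    refine ⟨?_, ?_, ?_⟩
    · rw [hH, huw]
      exact pdAux τ ρ⁻¹ w hτpos fun x =>
        mul_nonneg (inv_nonneg.2 hρpos.le) (Complex.normSq_nonneg _)
    · rw [e1, huw]
      refine psdAux _ _ w fun x => ?_
      have h1 := Finset.sum_nonneg (fun i (_ : i ∈ Finset.univ) => Complex.normSq_nonneg (x i))
      have h2 := Complex.normSq_nonneg (∑ i, (starRingEnd ℂ) (w i) * x i)
      exact add_nonneg (mul_nonneg (by linarith) h1)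
        (mul_nonneg (inv_nonneg.2 hρpos.le) h2)
    · rw [e2, huw]
      refine psdAux _ _ w fun x => ?_
      have h1 := Finset.sum_nonneg (fun i (_ : i ∈ Finset.univ) => Complex.normSq_nonneg (x i))
      have h4 := hCS x
      have h3 : 0 ≤ ρ⁻¹ := inv_nonneg.2 hρpos.le
      exact r10 (mul_nonneg (sub_nonneg.2 hfin) h1) (mul_nonneg h3 (sub_nonneg.2 h4))
  · -- zero branch
    have huz : u = 0 := by rw [hu, if_neg hcase]
    have hT0 : ∀ x : Fin N → ℂ,
        (∑ i, (starRingEnd ℂ) ((0 : EC N) i) * x i) = 0 := by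
      intro x; simp
    refine ⟨?_, ?_, ?_⟩
    · rw [hH, huz]
      exact pdAux τ ρ⁻¹ 0 hτpos fun x => by rw [hT0]; simp
    · rw [e1, huz]
      refine psdAux _ _ 0 fun x => ?_
      rw [hT0]
      have h1 := Finset.sum_nonneg (fun i (_ : i ∈ Finset.univ) => Complex.normSq_nonneg (x i))
      simp only [Complex.normSq_zero, mul_zero, add_zero]
      exact mul_nonneg (by linarith) h1
    · rw [e2, huz]
      refine psdAux _ _ 0 fun x => ?_
      rw [hT0]
      have h1 := Finset.sum_nonneg (fun i (_ : i ∈ Finset.univ) => Complex.normSq_nonneg (x i))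
      simp only [Complex.normSq_zero, mul_zero, add_zero]
      exact mul_nonneg (by linarith) h1
end

section
/- Let f : ℂ^N → ℝ be differentiable (over ℝ) with L-Lipschitz gradient ∇f for some L > 0, let h : ℂ^N → ℝ be convex and differentiable, and set F = h + f. Let C ⊆ ℂ^N be a nonempty closed convex set, let B ∈ ℂ^{N×N} be Hermitian with η·I_N ⪯ B for some η > 0, and let 0 < α ≤ η/L. Fix x ∈ C and let x⁺ ∈ C be a minimizer over C of x̄ ↦ S_h(x̄, x, ∇f(x), B, α). Then F(x⁺) ≤ F(x) − (α/2)·D_h^C(x, ∇f(x), B, α). -/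
open scoped ComplexOrder

open scoped ComplexOrder in
private lemma descent_lemma {N : ℕ} (f : EC N → ℝ) (gradf : EC N → EC N) (L : ℝ) (hL : 0 < L)
    (hfdiff : ∀ x : EC N, HasFDerivAt f (gradDual (gradf x)) x)
    (hlip : ∀ x₁ x₂ : EC N, ‖gradf x₁ - gradf x₂‖ ≤ L * ‖x₁ - x₂‖)
    (x y : EC N) :
    f y ≤ f x + (inner ℂ (gradf x) (y - x) : ℂ).re + L / 2 * ‖y - x‖ ^ 2 := by
  set v := y - x with hv
  set φ' : ℝ → ℝ := fun t => (inner ℂ (gradf (x + t • v)) v : ℂ).re with hφ'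
  have hline : ∀ t : ℝ, HasDerivAt (fun s : ℝ => x + s • v) v t := by
    intro t
    simpa using ((hasDerivAt_id t).smul_const v).const_add x
  have hderiv : ∀ t : ℝ, HasDerivAt (fun s : ℝ => f (x + s • v)) (φ' t) t := by
    intro t
    exact (hfdiff (x + t • v)).comp_hasDerivAt t (hline t)
  have hgradcont : Continuous gradf := by
    rw [Metric.continuous_iff]
    intro a ε hε
    refine ⟨ε / (L + 1), by positivity, fun b hb => ?_⟩
    have h1 : dist (gradf b) (gradf a) ≤ L * dist b a := by
      simpa [dist_eq_norm] using hlip b a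
    calc dist (gradf b) (gradf a) ≤ L * dist b a := h1
      _ < L * (ε / (L + 1)) + ε / (L+1) := by nlinarith [dist_nonneg (x := b) (y := a)]
      _ = ε := by field_simp
  have hcont : Continuous φ' := by
    apply Complex.continuous_re.comp
    exact Continuous.inner
      (hgradcont.comp (continuous_const.add (continuous_id.smul continuous_const)))
      continuous_const
  have hInt : IntervalIntegrable φ' MeasureTheory.volume 0 1 := hcont.intervalIntegrable _ _
  have key : f y - f x = ∫ t in (0:ℝ)..1, φ' t := by
    rw [intervalIntegral.integral_eq_sub_of_hasDerivAt (fun t _ => hderiv t) hInt]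
    simp [hv]
  have hbound : ∀ t ∈ Set.Icc (0:ℝ) 1, φ' t ≤ (inner ℂ (gradf x) v : ℂ).re + (L * ‖v‖^2) * t := by
    intro t ht
    have hsplit : (inner ℂ (gradf (x + t • v)) v : ℂ) =
        inner ℂ (gradf x) v + inner ℂ (gradf (x + t • v) - gradf x) v := by
      rw [← inner_add_left]; congr 1; abel
    have h1 : (inner ℂ (gradf (x + t • v) - gradf x) v : ℂ).re ≤ L * t * ‖v‖ * ‖v‖ := by
      calc (inner ℂ (gradf (x + t • v) - gradf x) v : ℂ).re
          ≤ ‖(inner ℂ (gradf (x + t • v) - gradf x) v : ℂ)‖ := Complex.re_le_norm _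
        _ ≤ ‖gradf (x + t • v) - gradf x‖ * ‖v‖ := norm_inner_le_norm _ _
        _ ≤ (L * ‖x + t • v - x‖) * ‖v‖ := by
            gcongr; exact hlip _ _
        _ = L * t * ‖v‖ * ‖v‖ := by
            rw [add_sub_cancel_left, norm_smul, Real.norm_eq_abs, abs_of_nonneg ht.1]; ring
    have : φ' t = (inner ℂ (gradf x) v : ℂ).re + (inner ℂ (gradf (x + t • v) - gradf x) v : ℂ).re := by
      rw [hφ']; simp only [hsplit, Complex.add_re]
    rw [this]; nlinarith [sq_nonneg ‖v‖]
  have hmono : (∫ t in (0:ℝ)..1, φ' t) ≤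
      ∫ t in (0:ℝ)..1, ((inner ℂ (gradf x) v : ℂ).re + (L * ‖v‖^2) * t) := by
    apply intervalIntegral.integral_mono_on zero_le_one hInt
    · exact (continuous_const.add (continuous_const.mul continuous_id)).intervalIntegrable _ _
    · exact hbound
  have hrhs : (∫ t in (0:ℝ)..1, ((inner ℂ (gradf x) v : ℂ).re + (L * ‖v‖^2) * t)) =
      (inner ℂ (gradf x) v : ℂ).re + L / 2 * ‖v‖^2 := by
    have h1 : IntervalIntegrable (fun t : ℝ => L * ‖v‖^2 * t) MeasureTheory.volume 0 1 :=
      (continuous_const.mul continuous_id').intervalIntegrable _ _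
    rw [intervalIntegral.integral_add intervalIntegrable_const h1,
      intervalIntegral.integral_const_mul, integral_id, intervalIntegral.integral_const]
    simp
    ring
  linarith [key ▸ hmono.trans_eq hrhs, key]

open scoped ComplexOrder in
private lemma wnorm2_lower {N : ℕ} (B : Matrix (Fin N) (Fin N) ℂ) (η : ℝ)
    (hBlb : (B - η • (1 : Matrix (Fin N) (Fin N) ℂ)).PosSemidef) (z : EC N) :
    η * ‖z‖ ^ 2 ≤ wnorm2 B z := by
  have h0 := hBlb.dotProduct_mulVec_nonneg (fun i => z i)
  have hmv : (B - η • (1 : Matrix (Fin N) (Fin N) ℂ)).mulVec (fun i => z i) =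
      B.mulVec (fun i => z i) - η • (fun i => z i) := by
    rw [Matrix.sub_mulVec, Matrix.smul_mulVec, Matrix.one_mulVec]
  rw [hmv, dotProduct_sub, dotProduct_smul] at h0
  have h1 : (0:ℝ) ≤ (dotProduct (fun i => starRingEnd ℂ (z i)) (B.mulVec (fun i => z i))
      - η • dotProduct (fun i => starRingEnd ℂ (z i)) (fun i => z i)).re := by
    have := (Complex.le_def.mp h0).1
    exact this
  have h2 : (dotProduct (fun i => starRingEnd ℂ (z i)) (fun i => z i)).re = ‖z‖ ^ 2 := by
    have h3 : (inner ℂ z z : ℂ) =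
        dotProduct (fun i => starRingEnd ℂ (z i)) (fun i => z i) :=
        (EuclideanSpace.inner_eq_star_dotProduct z z).trans (dotProduct_comm _ _)
    rw [← h3]
    have := inner_self_eq_norm_sq (𝕜 := ℂ) z
    simpa using this
  rw [Complex.sub_re, Complex.smul_re, h2] at h1
  simpa [wnorm2] using h1

/-- Sufficient decrease of the cost. Let `f` be
real-differentiable with `L`-Lipschitz gradient (`L > 0`), `h` convex
differentiable, `F = h + f`, `C` nonempty closed convex, `B` Hermitian with
`η·I ⪯ B` for some `η > 0`, `0 < α ≤ η/L`, `x ∈ C`, and let `x⁺ ∈ C` minimize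
`x̄ ↦ S_h(x̄, x, ∇f(x), B, α)` over `C`. Then
`F(x⁺) ≤ F(x) − (α/2)·D_h^C(x, ∇f(x), B, α)`. -/
theorem stmt11 {N : ℕ} (f : EC N → ℝ) (gradf : EC N → EC N) (L : ℝ) (hL : 0 < L)
    (hfdiff : ∀ x : EC N, HasFDerivAt f (gradDual (gradf x)) x)
    (hlip : ∀ x₁ x₂ : EC N, ‖gradf x₁ - gradf x₂‖ ≤ L * ‖x₁ - x₂‖)
    (h : EC N → ℝ) (hconv : ConvexOn ℝ Set.univ h) (hdiff : Differentiable ℝ h)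
    (F : EC N → ℝ) (hF : F = fun z => h z + f z)
    (C : Set (EC N)) (hCne : C.Nonempty) (hCcl : IsClosed C) (hCcv : Convex ℝ C)
    (B : Matrix (Fin N) (Fin N) ℂ) (hBH : B.IsHermitian)
    (η : ℝ) (hη : 0 < η)
    (hBlb : (B - η • (1 : Matrix (Fin N) (Fin N) ℂ)).PosSemidef)
    (α : ℝ) (hα : 0 < α) (hαle : α ≤ η / L)
    (x : EC N) (hx : x ∈ C) (xp : EC N) (hxp : xp ∈ C)
    (hmin : IsMinOn (fun xb => Sh h B α (gradf x) x xb) C xp) :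
    F xp ≤ F x - (α / 2) * Dh h C B α (gradf x) x := by
  -- the infimum is attained at xp
  have hinf : sInf ((fun xb => Sh h B α (gradf x) x xb) '' C) = Sh h B α (gradf x) x xp := by
    apply IsLeast.csInf_eq
    constructor
    · exact ⟨xp, hxp, rfl⟩
    · rintro y ⟨c, hc, rfl⟩
      exact hmin hc
  have hDh : F x - (α / 2) * Dh h C B α (gradf x) x = F x + Sh h B α (gradf x) x xp := by
    rw [Dh, hinf]
    field_simp
    ring
  rw [hDh, hF, Sh]
  have hdesc := descent_lemma f gradf L hL hfdiff hlip x xp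
  have hw := wnorm2_lower B η hBlb (xp - x)
  have hαL : α * L ≤ η := by
    rw [le_div_iff₀ hL] at hαle
    exact hαle
  set n := ‖xp - x‖ ^ 2 with hn
  have hn0 : 0 ≤ n := sq_nonneg _
  set w := wnorm2 B (xp - x) with hwdef
  have h3 : L / 2 * n ≤ 1 / (2 * α) * w := by
    have h4 : α * L * n ≤ w := by nlinarith
    calc L / 2 * n = (α * L * n) / (2 * α) := by field_simp
      _ ≤ w / (2 * α) := by
          apply div_le_div_of_nonneg_right h4 (by positivity) |>.trans_eq rfl
      _ = 1 / (2 * α) * w := by ring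
  dsimp only
  linarith
end
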